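/- Let F, F₂ ∈ ℝ² and a > 0 with 2a > dist(F, F₂), and let ε = {X ∈ ℝ² : dist(X, F) + dist(X, F₂) = 2a} be an ellipse with focus F. Let d₀ be a line not passing through F and p₀ = {X ∈ ℝ² : dist(X, F) = dist(X, d₀)} the parabola with focus F and directrix d₀. For θ ∈ ℝ let p_θ be the image of p₀ under the rotation of the plane about F by angle θ. Then there exists a nonzero polynomial function q : ℝ² → ℝ of total degree at most 2 such that: for every θ ∈ ℝ and all distinct points P, Q ∈ ε ∩ p_θ, there exist c, t₀ ∈ ℝ with q(P + t·(Q − P)) = c·(t − t₀)² for all t ∈ ℝ; that is, the line through P and Q is tangent to the fixed conic {q = 0}. -/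

import Mathlib

open RealInnerProductSpace

noncomputable section

/-- The Euclidean plane. -/
abbrev Pt := EuclideanSpace ℝ (Fin 2)

/-- `L` is a line in the plane. -/
def IsLine (L : Set Pt) : Prop :=
  ∃ P v : Pt, v ≠ 0 ∧ L = {X | ∃ t : ℝ, X = P + t • v}

/-- Rotation of the vector `v` by angle `θ` about the origin. -/
def rotVec (θ : ℝ) (v : Pt) : Pt :=
  WithLp.toLp 2 ![Real.cos θ * v 0 - Real.sin θ * v 1, Real.sin θ * v 0 + Real.cos θ * v 1]

/-- Rotation of the plane about the point `F` by angle `θ`. -/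
def rotAbout (F : Pt) (θ : ℝ) (X : Pt) : Pt := F + rotVec θ (X - F)

/-- `q` is a nonzero polynomial function of total degree at most 2. -/
def IsNonzeroQuadratic (q : Pt → ℝ) : Prop :=
  ∃ A B C D E G : ℝ, ¬(A = 0 ∧ B = 0 ∧ C = 0 ∧ D = 0 ∧ E = 0 ∧ G = 0) ∧
    ∀ X : Pt, q X = A * (X 0) ^ 2 + B * (X 0) * (X 1) + C * (X 1) ^ 2
      + D * (X 0) + E * (X 1) + G

/-- The line through the distinct points `P` and `Q` is tangent to the conic `{q = 0}`:
the restriction of `q` to the affine parameterization `t ↦ P + t • (Q - P)` is a perfect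
square `c * (t - t₀) ^ 2`. -/
def LineTangentToConic (q : Pt → ℝ) (P Q : Pt) : Prop :=
  ∃ c t₀ : ℝ, ∀ t : ℝ, q (P + t • (Q - P)) = c * (t - t₀) ^ 2

/-- Coordinate formula for distance in the plane. -/
lemma dist_coord (A B : Pt) : dist A B = Real.sqrt ((A 0 - B 0)^2 + (A 1 - B 1)^2) := by
  rw [EuclideanSpace.dist_eq, Fin.sum_univ_two]
  simp [Real.dist_eq, sq_abs]

lemma dist_sq_coord (A B : Pt) : dist A B ^ 2 = (A 0 - B 0)^2 + (A 1 - B 1)^2 := by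
  rw [dist_coord, Real.sq_sqrt (by positivity)]

/-- Master identity: decomposition along a unit vector and its perpendicular. -/
lemma perp_decomp (n0 n1 z0 z1 : ℝ) (hn : n0^2 + n1^2 = 1) :
    z0^2 + z1^2 = (z0*n0 + z1*n1)^2 + (z0*n1 - z1*n0)^2 := by
  linear_combination (-(z0^2) - z1^2) * hn

set_option maxHeartbeats 2000000 in
/-- **Theorem 4.** Given an ellipse `ε` with focus `F` and a parabola with focus `F`,
as the parabola rotates about `F`, the common chord of the ellipse and the parabola
remains tangent to some fixed conic. -/
theorem common_chord_tangent_fixed_conic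
    (F F₂ : Pt) (a : ℝ) (ha : 0 < a) (hfoci : dist F F₂ < 2 * a)
    (d₀ : Set Pt) (hd₀ : IsLine d₀) (hF : F ∉ d₀) :
    ∃ q : Pt → ℝ, IsNonzeroQuadratic q ∧
      ∀ θ : ℝ, ∀ P Q : Pt,
        dist P F + dist P F₂ = 2 * a →
        dist Q F + dist Q F₂ = 2 * a →
        P ∈ rotAbout F θ '' {X : Pt | dist X F = Metric.infDist X d₀} →
        Q ∈ rotAbout F θ '' {X : Pt | dist X F = Metric.infDist X d₀} →
        P ≠ Q →
        LineTangentToConic q P Q := by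
  obtain ⟨P₀, v, hv, hdeq⟩ := hd₀
  have hvne : v 0 ≠ 0 ∨ v 1 ≠ 0 := by
    by_contra h; push_neg at h
    exact hv (PiLp.ext fun i => by fin_cases i <;> simp [h.1, h.2])
  have hvv : 0 < v 0 ^ 2 + v 1 ^ 2 := by
    rcases hvne with h | h <;> positivity
  obtain ⟨L, hLdef⟩ : ∃ x : ℝ, x = Real.sqrt (v 0 ^ 2 + v 1 ^ 2) := ⟨_, rfl⟩
  have hL : 0 < L := hLdef ▸ Real.sqrt_pos.2 hvv
  have hL2 : L ^ 2 = v 0 ^ 2 + v 1 ^ 2 := hLdef ▸ Real.sq_sqrt hvv.le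
  obtain ⟨s, hsdef⟩ : ∃ x : ℝ, x = (F 0 - P₀ 0) * v 1 - (F 1 - P₀ 1) * v 0 := ⟨_, rfl⟩
  have hs : s ≠ 0 := by
    intro h
    rw [hsdef] at h
    apply hF
    rw [hdeq]
    refine ⟨((F 0 - P₀ 0) * v 0 + (F 1 - P₀ 1) * v 1) / (v 0 ^ 2 + v 1 ^ 2), ?_⟩
    ext i
    fin_cases i
    · show F 0 = P₀ 0 + _ * v 0
      field_simp
      linear_combination (v 1) * h
    · show F 1 = P₀ 1 + _ * v 1
      field_simp
      linear_combination (-(v 0)) * h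
  have habs : |s| ≠ 0 := abs_ne_zero.2 hs
  have habs2 : |s| ^ 2 = s ^ 2 := sq_abs s
  obtain ⟨n0, hn0def⟩ : ∃ x : ℝ, x = s * (-(v 1)) / (|s| * L) := ⟨_, rfl⟩
  obtain ⟨n1, hn1def⟩ : ∃ x : ℝ, x = s * v 0 / (|s| * L) := ⟨_, rfl⟩
  obtain ⟨δ, hδdef⟩ : ∃ x : ℝ, x = |s| / L := ⟨_, rfl⟩
  have hδ : 0 < δ := hδdef ▸ div_pos (abs_pos.2 hs) hL
  have hn : n0 ^ 2 + n1 ^ 2 = 1 := by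
    rw [hn0def, hn1def]
    field_simp
    linear_combination (-(v 0 ^ 2 + v 1 ^ 2)) * habs2 + (-(|s| ^ 2)) * hL2
  have hvn : v 0 * n0 + v 1 * n1 = 0 := by
    rw [hn0def, hn1def]; field_simp; ring
  have hP₀δ : (P₀ 0 - F 0) * n0 + (P₀ 1 - F 1) * n1 = δ := by
    rw [hn0def, hn1def, hδdef]
    have h1 : (P₀ 0 - F 0) * (s * -v 1 / (|s| * L)) + (P₀ 1 - F 1) * (s * v 0 / (|s| * L))
        = (s * ((F 0 - P₀ 0) * v 1 - (F 1 - P₀ 1) * v 0)) / (|s| * L) := by ring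
    rw [h1, ← hsdef]
    rw [show s * s = |s| * |s| by rw [← sq, ← sq, sq_abs]]
    exact mul_div_mul_left _ _ habs
  -- the distance formula to the line d₀
  have hinf : ∀ X : Pt, Metric.infDist X d₀ = |((X 0 - F 0) * n0 + (X 1 - F 1) * n1) - δ| := by
    intro X
    have hcP₀ : (X 0 - F 0) * n0 + (X 1 - F 1) * n1 - δ
        = (X 0 - P₀ 0) * n0 + (X 1 - P₀ 1) * n1 := by
      linear_combination hP₀δ
    apply le_antisymm
    · obtain ⟨t, htdef⟩ : ∃ x : ℝ,
        x = ((X 0 - P₀ 0) * v 0 + (X 1 - P₀ 1) * v 1) / (v 0 ^ 2 + v 1 ^ 2) := ⟨_, rfl⟩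
      have hY : P₀ + t • v ∈ d₀ := by rw [hdeq]; exact ⟨t, rfl⟩
      refine le_trans (Metric.infDist_le_dist_of_mem hY) ?_
      rw [dist_coord]
      have h0 : (P₀ + t • v) 0 = P₀ 0 + t * v 0 := by simp
      have h1 : (P₀ + t • v) 1 = P₀ 1 + t * v 1 := by simp
      rw [h0, h1]
      have hperp : (X 0 - (P₀ 0 + t * v 0)) * v 0 + (X 1 - (P₀ 1 + t * v 1)) * v 1 = 0 := by
        rw [htdef]; field_simp; ring
      -- cross of z with n vanishes since both are ⊥ v
      have hcross : (X 0 - (P₀ 0 + t * v 0)) * n1 - (X 1 - (P₀ 1 + t * v 1)) * n0 = 0 := by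
        rcases hvne with h | h
        · have := hvn
          -- v 0 * cross = (z·v) n1 - z1 (v0 n0 + v1 n1) ... derive
          have h2 : v 0 * ((X 0 - (P₀ 0 + t * v 0)) * n1 - (X 1 - (P₀ 1 + t * v 1)) * n0) = 0 := by
            linear_combination n1 * hperp - (X 1 - (P₀ 1 + t * v 1)) * hvn
          exact by
            rcases mul_eq_zero.mp h2 with h' | h'
            · exact absurd h' h
            · exact h'
        · have h2 : v 1 * ((X 0 - (P₀ 0 + t * v 0)) * n1 - (X 1 - (P₀ 1 + t * v 1)) * n0) = 0 := by
            linear_combination (X 0 - (P₀ 0 + t * v 0)) * hvn - n0 * hperp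
          exact by
            rcases mul_eq_zero.mp h2 with h' | h'
            · exact absurd h' h
            · exact h'
      have hkey : (X 0 - (P₀ 0 + t * v 0))^2 + (X 1 - (P₀ 1 + t * v 1))^2
          = ((X 0 - F 0) * n0 + (X 1 - F 1) * n1 - δ) ^ 2 := by
        rw [hcP₀]
        have hc2 : (X 0 - P₀ 0) * n0 + (X 1 - P₀ 1) * n1
            = (X 0 - (P₀ 0 + t * v 0)) * n0 + (X 1 - (P₀ 1 + t * v 1)) * n1 := by
          linear_combination t * hvn
        rw [hc2]
        have := perp_decomp n0 n1 (X 0 - (P₀ 0 + t * v 0)) (X 1 - (P₀ 1 + t * v 1)) hn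
        rw [this, hcross]
        ring
      rw [hkey, Real.sqrt_sq_eq_abs]
    · have hne : d₀.Nonempty := ⟨P₀, by rw [hdeq]; exact ⟨0, by simp⟩⟩
      by_contra hlt
      push_neg at hlt
      obtain ⟨Y, hY, hYlt⟩ := (Metric.infDist_lt_iff hne).1 hlt
      rw [hdeq] at hY
      obtain ⟨t, rfl⟩ := hY
      have h0 : (P₀ + t • v) 0 = P₀ 0 + t * v 0 := by simp
      have h1 : (P₀ + t • v) 1 = P₀ 1 + t * v 1 := by simp
      rw [dist_coord, h0, h1] at hYlt
      have hc2 : (X 0 - F 0) * n0 + (X 1 - F 1) * n1 - δ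
          = (X 0 - (P₀ 0 + t * v 0)) * n0 + (X 1 - (P₀ 1 + t * v 1)) * n1 := by
        rw [hcP₀]; linear_combination t * hvn
      rw [hc2, ← Real.sqrt_sq_eq_abs] at hYlt
      have hmono : ((X 0 - (P₀ 0 + t * v 0)) * n0 + (X 1 - (P₀ 1 + t * v 1)) * n1) ^ 2
          ≤ (X 0 - (P₀ 0 + t * v 0)) ^ 2 + (X 1 - (P₀ 1 + t * v 1)) ^ 2 := by
        have := perp_decomp n0 n1 (X 0 - (P₀ 0 + t * v 0)) (X 1 - (P₀ 1 + t * v 1)) hn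
        nlinarith [sq_nonneg ((X 0 - (P₀ 0 + t * v 0)) * n1 - (X 1 - (P₀ 1 + t * v 1)) * n0)]
      exact absurd hYlt (not_lt.2 (Real.sqrt_le_sqrt hmono))
  -- ellipse quantities
  obtain ⟨u0, hu0def⟩ : ∃ x : ℝ, x = (F₂ 0 - F 0) / (2 * a) := ⟨_, rfl⟩
  obtain ⟨u1, hu1def⟩ : ∃ x : ℝ, x = (F₂ 1 - F 1) / (2 * a) := ⟨_, rfl⟩
  obtain ⟨k, hkdef⟩ : ∃ x : ℝ, x = a - ((F₂ 0 - F 0)^2 + (F₂ 1 - F 1)^2) / (4 * a) := ⟨_, rfl⟩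
  obtain ⟨m, hmdef⟩ : ∃ x : ℝ, x = δ - k := ⟨_, rfl⟩
  have hw : (F₂ 0 - F 0)^2 + (F₂ 1 - F 1)^2 < (2*a)^2 := by
    have h1 := dist_sq_coord F F₂
    nlinarith [dist_nonneg (x := F) (y := F₂), hfoci]
  have hu2 : u0^2 + u1^2 < 1 := by
    rw [hu0def, hu1def, div_pow, div_pow, ← add_div, div_lt_one (by positivity)]
    nlinarith [hw]
  -- the focal equation of the ellipse
  have hell : ∀ R : Pt, dist R F + dist R F₂ = 2*a →
      dist R F = k + ((R 0 - F 0)*u0 + (R 1 - F 1)*u1) := by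
    intro R hR
    have h2 : dist R F₂ = 2*a - dist R F := by linarith
    have h3 : dist R F₂ ^ 2 = (2*a - dist R F)^2 := by rw [h2]
    rw [dist_sq_coord] at h3
    have h4 := dist_sq_coord R F
    have ha4 : (4:ℝ)*a ≠ 0 := by positivity
    apply mul_left_cancel₀ ha4
    rw [hkdef, hu0def, hu1def]
    field_simp
    linear_combination 2 * h3 + 2 * h4
  -- the focal equation of the (rotated) parabola
  have hpar : ∀ ν0 ν1 : ℝ, ν0^2 + ν1^2 = 1 → ∀ R : Pt,
      dist R F = |((R 0 - F 0)*ν0 + (R 1 - F 1)*ν1) - δ| →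
      dist R F = δ - ((R 0 - F 0)*ν0 + (R 1 - F 1)*ν1) := by
    intro ν0 ν1 hν R hR
    have h4 := dist_sq_coord R F
    have hCS : ((R 0 - F 0)*ν0 + (R 1 - F 1)*ν1)^2 ≤ dist R F ^ 2 := by
      have := perp_decomp ν0 ν1 (R 0 - F 0) (R 1 - F 1) hν
      nlinarith [sq_nonneg ((R 0 - F 0)*ν1 - (R 1 - F 1)*ν0)]
    rcases abs_cases (((R 0 - F 0)*ν0 + (R 1 - F 1)*ν1) - δ) with ⟨h1, _⟩ | ⟨h1, _⟩
    · exfalso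
      rw [h1] at hR
      nlinarith [dist_nonneg (x := R) (y := F), hδ, hCS]
    · rw [h1] at hR; linarith
  -- the conic
  refine ⟨fun X => (X 0 - F 0)^2 + (X 1 - F 1)^2
      - (m - u0*(X 0 - F 0) - u1*(X 1 - F 1))^2, ?_, ?_⟩
  · refine ⟨1 - u0^2, -2*u0*u1, 1 - u1^2,
      -2*(F 0)*(1-u0^2) + 2*u0*u1*(F 1) + 2*m*u0,
      -2*(F 1)*(1-u1^2) + 2*u0*u1*(F 0) + 2*m*u1,
      (1-u0^2)*(F 0)^2 - 2*u0*u1*(F 0)*(F 1) + (1-u1^2)*(F 1)^2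
        - 2*m*u0*(F 0) - 2*m*u1*(F 1) - m^2, ?_, fun X => by ring⟩
    rintro ⟨hA, -⟩
    nlinarith [sq_nonneg u1, hu2, hA]
  intro θ P Q hPe hQe hPm hQm hPQ
  have pyth := Real.sin_sq_add_cos_sq θ
  obtain ⟨ν0, hν0def⟩ : ∃ x : ℝ, x = Real.cos θ * n0 - Real.sin θ * n1 := ⟨_, rfl⟩
  obtain ⟨ν1, hν1def⟩ : ∃ x : ℝ, x = Real.sin θ * n0 + Real.cos θ * n1 := ⟨_, rfl⟩
  have hν : ν0^2 + ν1^2 = 1 := by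
    rw [hν0def, hν1def]
    linear_combination (n0^2 + n1^2) * pyth + hn
  have hrot : ∀ R : Pt, R ∈ rotAbout F θ '' {X : Pt | dist X F = Metric.infDist X d₀} →
      dist R F = δ - ((R 0 - F 0)*ν0 + (R 1 - F 1)*ν1) := by
    rintro R ⟨X, hX, rfl⟩
    rw [Set.mem_setOf_eq, hinf X] at hX
    apply hpar ν0 ν1 hν
    have h0 : (rotAbout F θ X) 0
        = F 0 + (Real.cos θ * (X 0 - F 0) - Real.sin θ * (X 1 - F 1)) := by
      simp [rotAbout, rotVec]
    have h1 : (rotAbout F θ X) 1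
        = F 1 + (Real.sin θ * (X 0 - F 0) + Real.cos θ * (X 1 - F 1)) := by
      simp [rotAbout, rotVec]
    have hdist : dist (rotAbout F θ X) F = dist X F := by
      rw [dist_coord, dist_coord, h0, h1]
      congr 1
      linear_combination ((X 0 - F 0)^2 + (X 1 - F 1)^2) * pyth
    have hdot : ((rotAbout F θ X) 0 - F 0)*ν0 + ((rotAbout F θ X) 1 - F 1)*ν1
        = (X 0 - F 0)*n0 + (X 1 - F 1)*n1 := by
      rw [h0, h1, hν0def, hν1def]
      linear_combination ((X 0 - F 0)*n0 + (X 1 - F 1)*n1) * pyth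
    rw [hdist, hdot]
    exact hX
  have hP1 := hrot P hPm
  have hQ1 := hrot Q hQm
  have hP2 := hell P hPe
  have hQ2 := hell Q hQe
  have hP4 := dist_sq_coord P F
  have hQ4 := dist_sq_coord Q F
  have hdecP := perp_decomp ν0 ν1 (P 0 - F 0) (P 1 - F 1) hν
  have hdecQ := perp_decomp ν0 ν1 (Q 0 - F 0) (Q 1 - F 1) hν
  -- the chord is never perpendicular to the directrix
  have hα : (Q 0 - P 0)*ν1 - (Q 1 - P 1)*ν0 ≠ 0 := by
    intro h0
    have eP : δ^2 - 2*δ*((P 0 - F 0)*ν0 + (P 1 - F 1)*ν1)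
        = ((P 0 - F 0)*ν1 - (P 1 - F 1)*ν0)^2 := by
      have h1 : (δ - ((P 0 - F 0)*ν0 + (P 1 - F 1)*ν1))^2 = dist P F ^ 2 := by rw [← hP1]
      linear_combination h1 + hP4 + hdecP
    have eQ : δ^2 - 2*δ*((Q 0 - F 0)*ν0 + (Q 1 - F 1)*ν1)
        = ((Q 0 - F 0)*ν1 - (Q 1 - F 1)*ν0)^2 := by
      have h1 : (δ - ((Q 0 - F 0)*ν0 + (Q 1 - F 1)*ν1))^2 = dist Q F ^ 2 := by rw [← hQ1]
      linear_combination h1 + hQ4 + hdecQ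
    have hββ : (Q 0 - F 0)*ν1 - (Q 1 - F 1)*ν0 = (P 0 - F 0)*ν1 - (P 1 - F 1)*ν0 := by
      linear_combination h0
    have hνν : (Q 0 - F 0)*ν0 + (Q 1 - F 1)*ν1 = (P 0 - F 0)*ν0 + (P 1 - F 1)*ν1 := by
      have h2δ : (2:ℝ)*δ ≠ 0 := by positivity
      apply mul_left_cancel₀ h2δ
      linear_combination eP - eQ
        - (((Q 0 - F 0)*ν1 - (Q 1 - F 1)*ν0) + ((P 0 - F 0)*ν1 - (P 1 - F 1)*ν0)) * hββ
    have hd0 : Q 0 = P 0 := by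
      linear_combination ν0 * hνν + ν1 * hββ - (Q 0 - P 0) * hν
    have hd1 : Q 1 = P 1 := by
      linear_combination ν1 * hνν - ν0 * hββ - (Q 1 - P 1) * hν
    exact hPQ (PiLp.ext fun i => by fin_cases i <;> simp [hd0, hd1])
  refine ⟨((Q 0 - P 0)*ν1 - (Q 1 - P 1)*ν0)^2,
    -(((P 0 - F 0)*ν1 - (P 1 - F 1)*ν0) / ((Q 0 - P 0)*ν1 - (Q 1 - P 1)*ν0)), fun t => ?_⟩
  have hx0 : (P + t • (Q - P)) 0 = P 0 + t * (Q 0 - P 0) := by simp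
  have hx1 : (P + t • (Q - P)) 1 = P 1 + t * (Q 1 - P 1) := by simp
  have H1 : ((P 0 - F 0)*u0 + (P 1 - F 1)*u1) + ((P 0 - F 0)*ν0 + (P 1 - F 1)*ν1) = m := by
    rw [hmdef]; linear_combination hP1 - hP2
  have H2 : ((Q 0 - F 0)*u0 + (Q 1 - F 1)*u1) + ((Q 0 - F 0)*ν0 + (Q 1 - F 1)*ν1) = m := by
    rw [hmdef]; linear_combination hQ1 - hQ2
  have hrhs : ((Q 0 - P 0)*ν1 - (Q 1 - P 1)*ν0)^2 *
      (t - -(((P 0 - F 0)*ν1 - (P 1 - F 1)*ν0) / ((Q 0 - P 0)*ν1 - (Q 1 - P 1)*ν0)))^2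
      = (((Q 0 - P 0)*ν1 - (Q 1 - P 1)*ν0) * t + ((P 0 - F 0)*ν1 - (P 1 - F 1)*ν0))^2 := by
    field_simp
    ring
  simp only [hx0, hx1]
  rw [hrhs]
  linear_combination
    (-(((P 0 + t * (Q 0 - P 0)) - F 0)^2 + ((P 1 + t * (Q 1 - P 1)) - F 1)^2)) * hν
    + (((m - u0*((P 0 + t * (Q 0 - P 0)) - F 0) - u1*((P 1 + t * (Q 1 - P 1)) - F 1))
        + (((P 0 + t * (Q 0 - P 0)) - F 0)*ν0 + ((P 1 + t * (Q 1 - P 1)) - F 1)*ν1)) * (1 - t)) * H1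
    + (((m - u0*((P 0 + t * (Q 0 - P 0)) - F 0) - u1*((P 1 + t * (Q 1 - P 1)) - F 1))
        + (((P 0 + t * (Q 0 - P 0)) - F 0)*ν0 + ((P 1 + t * (Q 1 - P 1)) - F 1)*ν1)) * t) * H2
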